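/- Let s, N be integers with 1 ≤ s ≤ N, let q_{s+1},...,q_N ≥ 2 be integers, b = (β, 0) ∈ ℂ^s × ℂ^{N−s}, and r ∈ ℝ. Define δ(z,w) = 1 − 2i⟨z^q, b̄⟩ − (r + i Σ_{j=1}^s |β_j|²) w, where z^q = (z₁,...,z_s, z_{s+1}^{q_{s+1}},...,z_N^{q_N}). Then the map Ψ(z,w) = ((z₁+β₁w)/δ, ..., (z_s+β_s w)/δ, z_{s+1}/δ^{1/q_{s+1}}, ..., z_N/δ^{1/q_N}, w/δ) satisfies: whenever (z,w) ∈ P^N_q with δ(z,w) ≠ 0 and we choose a q_j-th root of δ for each j, the image Ψ(z,w) lies on P^N_q, i.e., Im(w/δ) = Σ_{j=1}^{s} |(z_j+β_j w)/δ|² + Σ_{j=s+1}^{N} |z_j|^{2q_j}/|δ|². -/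

import Mathlib

open Complex Finset in
theorem stmt_13 (N s : ℕ) (hs1 : 1 ≤ s) (hsN : s ≤ N) (q : Fin N → ℕ)
    (hq1 : ∀ j : Fin N, (j : ℕ) < s → q j = 1)
    (hq2 : ∀ j : Fin N, s ≤ (j : ℕ) → 2 ≤ q j)
    (β : Fin N → ℂ) (hβ : ∀ j : Fin N, s ≤ (j : ℕ) → β j = 0) (r : ℝ)
    (z : Fin N → ℂ) (w : ℂ)
    (hmem : w.im = ∑ j, ‖z j‖ ^ (2 * q j))
    (δ : ℂ)
    (hδ : δ = 1 - 2 * I * (∑ j : Fin N, (if (j : ℕ) < s then z j else z j ^ q j) * (starRingEnd ℂ) (β j))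
      - ((r : ℂ) + I * ∑ j ∈ univ.filter (fun j : Fin N => (j : ℕ) < s), (‖β j‖ ^ 2 : ℝ)) * w)
    (hδ0 : δ ≠ 0) :
    (w / δ).im
      = (∑ j ∈ univ.filter (fun j : Fin N => (j : ℕ) < s), ‖(z j + β j * w) / δ‖ ^ 2)
        + ∑ j ∈ univ.filter (fun j : Fin N => s ≤ (j : ℕ)), ‖z j‖ ^ (2 * q j) / ‖δ‖ ^ 2 := by
  classical
  set S : Finset (Fin N) := univ.filter (fun j : Fin N => (j : ℕ) < s) with hS
  set T : Finset (Fin N) := univ.filter (fun j : Fin N => s ≤ (j : ℕ)) with hT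
  have hTS : (univ.filter (fun j : Fin N => ¬ (j : ℕ) < s)) = T := by simp [hT, not_lt]
  -- the sum defining δ restricts to S
  have hA : (∑ j : Fin N, (if (j : ℕ) < s then z j else z j ^ q j) * (starRingEnd ℂ) (β j))
      = ∑ j ∈ S, z j * (starRingEnd ℂ) (β j) := by
    rw [← Finset.sum_filter_add_sum_filter_not univ (fun j : Fin N => (j : ℕ) < s), hTS]
    have h1 : ∑ j ∈ T, (if (j : ℕ) < s then z j else z j ^ q j) * (starRingEnd ℂ) (β j) = 0 := by
      apply Finset.sum_eq_zero
      intro j hj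
      simp only [hT, Finset.mem_filter] at hj
      rw [hβ j hj.2]
      simp
    rw [h1, add_zero]
    apply Finset.sum_congr rfl
    intro j hj
    simp only [Finset.mem_filter] at hj
    simp [hj.2]
  set A : ℂ := ∑ j ∈ S, z j * (starRingEnd ℂ) (β j) with hAdef
  set B : ℝ := ∑ j ∈ S, ‖β j‖ ^ 2 with hBdef
  have hδ' : δ = 1 - 2 * I * A - ((r : ℂ) + I * (B : ℂ)) * w := by
    rw [hδ, hA, hBdef]
  -- key imaginary part computation
  have hkey : (w * (starRingEnd ℂ) δ).im
      = w.im + 2 * (w * (starRingEnd ℂ) A).re + B * normSq w := by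
    rw [hδ']
    simp only [map_sub, map_add, map_mul, map_one, map_ofNat, conj_I, Complex.conj_ofReal]
    have : w * ((1 : ℂ) - 2 * (-I) * (starRingEnd ℂ) A
        - ((r : ℂ) + (-I) * (B : ℂ)) * (starRingEnd ℂ) w)
        = w + 2 * I * (w * (starRingEnd ℂ) A)
          - ((r : ℂ) - I * (B : ℂ)) * (w * (starRingEnd ℂ) w) := by ring
    rw [this, Complex.mul_conj]
    simp [Complex.sub_im, Complex.add_im, Complex.mul_im, Complex.mul_re]
  -- rewrite w.im
  have hwim : w.im = (∑ j ∈ S, normSq (z j)) + ∑ j ∈ T, ‖z j‖ ^ (2 * q j) := by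
    rw [hmem, ← Finset.sum_filter_add_sum_filter_not univ (fun j : Fin N => (j : ℕ) < s), hTS]
    congr 1
    apply Finset.sum_congr rfl
    intro j hj
    simp only [Finset.mem_filter] at hj
    rw [hq1 j hj.2, mul_one, Complex.normSq_eq_norm_sq]
  -- the re part as a sum
  have hre : (w * (starRingEnd ℂ) A).re = ∑ j ∈ S, (w * ((starRingEnd ℂ) (z j) * β j)).re := by
    rw [hAdef, map_sum, Finset.mul_sum, Complex.re_sum]
    apply Finset.sum_congr rfl
    intro j _
    simp
  -- termwise expansion
  have hterm : ∀ j ∈ S, normSq (z j + β j * w)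
      = normSq (z j) + 2 * (w * ((starRingEnd ℂ) (z j) * β j)).re + ‖β j‖ ^ 2 * normSq w := by
    intro j _
    rw [Complex.normSq_add]
    have h1 : normSq (β j * w) = ‖β j‖ ^ 2 * normSq w := by
      rw [Complex.normSq_mul, Complex.normSq_eq_norm_sq (β j)]
    have h2 : (z j * (starRingEnd ℂ) (β j * w)).re = (w * ((starRingEnd ℂ) (z j) * β j)).re := by
      rw [show z j * (starRingEnd ℂ) (β j * w)
          = (starRingEnd ℂ) (w * ((starRingEnd ℂ) (z j) * β j)) by
        simp only [map_mul, Complex.conj_conj]; ring]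
      rw [Complex.conj_re]
    rw [h1, h2]
    ring
  -- main identity
  have hmain : (w * (starRingEnd ℂ) δ).im
      = (∑ j ∈ S, normSq (z j + β j * w)) + ∑ j ∈ T, ‖z j‖ ^ (2 * q j) := by
    rw [hkey, hwim, hre, hBdef, Finset.sum_congr rfl hterm,
      Finset.sum_add_distrib, Finset.sum_add_distrib, ← Finset.mul_sum, ← Finset.sum_mul]
    ring
  -- conclude
  have hδns : (normSq δ : ℝ) ≠ 0 := by simpa using hδ0
  have hleft : (w / δ).im = (w * (starRingEnd ℂ) δ).im / normSq δ := by
    have h3 : w * (starRingEnd ℂ) δ = (w / δ) * (normSq δ : ℂ) := by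
      rw [← Complex.mul_conj]
      field_simp
    rw [h3, show ((w / δ) * (normSq δ : ℂ)).im = (w / δ).im * normSq δ by
      simp [Complex.mul_im]]
    field_simp
  rw [hleft, hmain, add_div, Finset.sum_div, Finset.sum_div]
  congr 1
  · apply Finset.sum_congr rfl
    intro j _
    rw [norm_div, div_pow, Complex.normSq_eq_norm_sq, Complex.normSq_eq_norm_sq]
  · apply Finset.sum_congr rfl
    intro j _
    simp [Complex.normSq_eq_norm_sq]
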